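/- Let m₁₁, m₀₀ ≥ 0 with m₁₁² + m₀₀² = 1, and set δ̄ := m₀₀/(m₁₁ + m₀₀). For δ ∈ [0,1] define Φ(δ) := m₁₁·∫_{x : η(x) ≥ δ} η dμ + m₀₀·∫_{x : η(x) < δ} (1 − η) dμ (the value of the linear metric at the threshold classifier 𝟙[η ≥ δ]). Suppose there exist constants k₁ ≥ k₀ > 0 and ν₀ > 0 such that for every ν ∈ (0, ν₀]: k₀·ν ≤ μ{x : 0 ≤ δ̄ − η(x) ≤ ν} ≤ k₁·ν. Then for every δ′ ∈ [0, δ̄] with δ̄ − δ′ ≤ ν₀, one has Φ(δ̄) − Φ(δ′) ≥ (k₀²/(4k₁))·(δ̄ − δ′)². In particular, if |Φ(δ̄) − Φ(δ′)| < ε_Ω then |δ̄ − δ′| < (2/k₀)·√(k₁·ε_Ω). -/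

import Mathlib

open MeasureTheory Set

/-- Under the two-sided density condition (Assumption 4) near the
Bayes-optimal threshold `δ̄ = m₀₀/(m₁₁+m₀₀)`, the linear-metric value `Φ` of
threshold classifiers satisfies the quadratic growth bound
`Φ(δ̄) − Φ(δ′) ≥ (k₀²/(4k₁))·(δ̄ − δ′)²` for `δ′ ≤ δ̄` close to `δ̄`;
in particular `|Φ(δ̄) − Φ(δ′)| < ε_Ω` forces `|δ̄ − δ′| < (2/k₀)·√(k₁ε_Ω)`. -/
theorem linear_metric_quadratic_growth_near_threshold
    {X : Type*} [MeasurableSpace X] (μ : Measure X) [IsProbabilityMeasure μ]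
    (η : X → ℝ) (hη : Measurable η) (hη01 : ∀ x, η x ∈ Icc (0:ℝ) 1)
    (m₁₁ m₀₀ : ℝ) (hm₁₁ : 0 ≤ m₁₁) (hm₀₀ : 0 ≤ m₀₀) (hnorm : m₁₁ ^ 2 + m₀₀ ^ 2 = 1)
    (δbar : ℝ) (hδbar : δbar = m₀₀ / (m₁₁ + m₀₀))
    (Φ : ℝ → ℝ)
    (hΦ : ∀ δ : ℝ, Φ δ = m₁₁ * (∫ x in {x | δ ≤ η x}, η x ∂μ) +
      m₀₀ * (∫ x in {x | η x < δ}, (1 - η x) ∂μ))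
    (k₀ k₁ ν₀ : ℝ) (hk₀ : 0 < k₀) (hk : k₀ ≤ k₁) (hν₀ : 0 < ν₀)
    (hdens : ∀ ν : ℝ, 0 < ν → ν ≤ ν₀ →
      k₀ * ν ≤ (μ {x | 0 ≤ δbar - η x ∧ δbar - η x ≤ ν}).toReal ∧
      (μ {x | 0 ≤ δbar - η x ∧ δbar - η x ≤ ν}).toReal ≤ k₁ * ν) :
    ∀ δ' : ℝ, δ' ∈ Icc (0:ℝ) δbar → δbar - δ' ≤ ν₀ →
      (k₀ ^ 2 / (4 * k₁)) * (δbar - δ') ^ 2 ≤ Φ δbar - Φ δ' ∧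
      (∀ εΩ : ℝ, 0 < εΩ → |Φ δbar - Φ δ'| < εΩ →
        |δbar - δ'| < (2 / k₀) * Real.sqrt (k₁ * εΩ)) := by
  have hk₁ : 0 < k₁ := lt_of_lt_of_le hk₀ hk
  have hm11le : m₁₁ ≤ 1 := by nlinarith
  have hm00le : m₀₀ ≤ 1 := by nlinarith
  have hM1 : 1 ≤ m₁₁ + m₀₀ := by nlinarith
  have hM0 : (0:ℝ) < m₁₁ + m₀₀ := by linarith
  have hδm : δbar * (m₁₁ + m₀₀) = m₀₀ := by
    rw [hδbar]; field_simp
  have hInt : Integrable η μ := by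
    refine Integrable.mono' (integrable_const (1:ℝ)) hη.aestronglyMeasurable ?_
    refine ae_of_all _ fun x => ?_
    rw [Real.norm_eq_abs, abs_le]
    exact ⟨by linarith [(hη01 x).1], (hη01 x).2⟩
  have hInt1 : Integrable (fun x => 1 - η x) μ := (integrable_const 1).sub hInt
  have hIntd : Integrable (fun x => δbar - η x) μ := (integrable_const δbar).sub hInt
  intro δ' hδ' hν
  set Δ := δbar - δ' with hΔdef
  have hΔ0 : 0 ≤ Δ := by rw [hΔdef]; linarith [hδ'.2]
  clear_value Δ
  set A : Set X := {x | δ' ≤ η x} ∩ {x | η x < δbar} with hAdef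
  have hA : MeasurableSet A :=
    (measurableSet_le measurable_const hη).inter (measurableSet_lt hη measurable_const)
  have hkey : Φ δbar - Φ δ' = (m₁₁ + m₀₀) * ∫ x in A, (δbar - η x) ∂μ := by
    have hU1 : {x | δ' ≤ η x} = {x | δbar ≤ η x} ∪ A := by
      ext x
      simp only [hAdef, mem_setOf_eq, mem_union, mem_inter_iff]
      constructor
      · intro h
        rcases lt_or_ge (η x) δbar with h2 | h2
        · exact Or.inr ⟨h, h2⟩
        · exact Or.inl h2
      · rintro (h | ⟨h, -⟩)
        · linarith [hδ'.2]
        · exact h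
    have hU2 : {x | η x < δbar} = {x | η x < δ'} ∪ A := by
      ext x
      simp only [hAdef, mem_setOf_eq, mem_union, mem_inter_iff]
      constructor
      · intro h
        rcases lt_or_ge (η x) δ' with h2 | h2
        · exact Or.inl h2
        · exact Or.inr ⟨h2, h⟩
      · rintro (h | ⟨-, h⟩)
        · linarith [hδ'.2]
        · exact h
    have hd1 : Disjoint {x | δbar ≤ η x} A := by
      rw [Set.disjoint_left]
      rintro x hx ⟨-, hx2⟩
      simp only [mem_setOf_eq] at hx hx2
      linarith
    have hd2 : Disjoint {x | η x < δ'} A := by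
      rw [Set.disjoint_left]
      rintro x hx ⟨hx1, -⟩
      simp only [mem_setOf_eq] at hx hx1
      linarith
    have e1 : ∫ x in {x | δ' ≤ η x}, η x ∂μ
        = ∫ x in {x | δbar ≤ η x}, η x ∂μ + ∫ x in A, η x ∂μ := by
      rw [hU1]
      exact setIntegral_union hd1 hA hInt.integrableOn hInt.integrableOn
    have e2 : ∫ x in {x | η x < δbar}, (1 - η x) ∂μ
        = ∫ x in {x | η x < δ'}, (1 - η x) ∂μ + ∫ x in A, (1 - η x) ∂μ := by
      rw [hU2]
      exact setIntegral_union hd2 hA hInt1.integrableOn hInt1.integrableOn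
    have e3 : ∫ x in A, (m₁₁ + m₀₀) * (δbar - η x) ∂μ
        = m₀₀ * ∫ x in A, (1 - η x) ∂μ - m₁₁ * ∫ x in A, η x ∂μ := by
      rw [← integral_const_mul, ← integral_const_mul, ← integral_sub
        (hInt1.integrableOn.const_mul _) (hInt.integrableOn.const_mul _)]
      apply integral_congr_ae
      refine ae_of_all _ fun x => ?_
      linear_combination hδm
    have e4 : (m₁₁ + m₀₀) * ∫ x in A, (δbar - η x) ∂μ
        = ∫ x in A, (m₁₁ + m₀₀) * (δbar - η x) ∂μ := (integral_const_mul _ _).symm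
    rw [hΦ δbar, hΦ δ', e1, e2, e4, e3]
    ring
  rcases eq_or_lt_of_le hΔ0 with h0 | hΔpos
  · -- δ' = δbar : everything is trivial
    have hEq : δ' = δbar := by rw [hΔdef] at h0; linarith
    constructor
    · rw [← h0, hEq]
      simp
    · intro εΩ hε _
      rw [← h0]
      simp only [abs_zero]
      have hs : 0 < Real.sqrt (k₁ * εΩ) := Real.sqrt_pos.mpr (mul_pos hk₁ hε)
      exact mul_pos (div_pos two_pos hk₀) hs
  · -- main case 0 < Δ
    set t := k₀ * Δ / (2 * k₁) with ht_def
    have ht0 : 0 < t := by positivity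
    have hk₁t : k₁ * t = k₀ * Δ / 2 := by
      rw [ht_def]; field_simp
    have htltΔ : t < Δ := by nlinarith
    clear_value t
    have htν₀ : t ≤ ν₀ := le_trans htltΔ.le hν
    set S : ℝ → Set X := fun ν => {x | 0 ≤ δbar - η x ∧ δbar - η x ≤ ν} with hSdef
    have hSmeas : ∀ ν, MeasurableSet (S ν) := fun ν =>
      (measurableSet_le measurable_const (measurable_const.sub hη)).inter
        (measurableSet_le (measurable_const.sub hη) measurable_const)
    have hSsub : S t ⊆ S Δ := fun x hx => ⟨hx.1, le_trans hx.2 htltΔ.le⟩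
    have hdΔ := hdens Δ hΔpos hν
    have hdt := hdens t ht0 htν₀
    set B : Set X := S Δ \ S t with hBdef
    have hB : MeasurableSet B := (hSmeas Δ).diff (hSmeas t)
    have hμB : (μ B).toReal = (μ (S Δ)).toReal - (μ (S t)).toReal := by
      rw [hBdef, measure_diff hSsub (hSmeas t).nullMeasurableSet (measure_ne_top μ _),
        ENNReal.toReal_sub_of_le (measure_mono hSsub) (measure_ne_top μ _)]
    have hμBlb : k₀ * Δ / 2 ≤ (μ B).toReal := by
      rw [hμB]
      have h1 : k₀ * Δ ≤ (μ (S Δ)).toReal := hdΔ.1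
      have h2 : (μ (S t)).toReal ≤ k₁ * t := hdt.2
      linarith [hk₁t]
    have hBsubA : B ⊆ A := by
      rintro x ⟨⟨hx1, hx2⟩, hx3⟩
      have hx3' : t < δbar - η x := by
        by_contra h
        push_neg at h
        exact hx3 ⟨hx1, h⟩
      constructor
      · simp only [mem_setOf_eq]; rw [hΔdef] at hx2; linarith
      · simp only [mem_setOf_eq]; linarith
    have hIB : t * (μ B).toReal ≤ ∫ x in B, (δbar - η x) ∂μ := by
      refine setIntegral_ge_of_const_le_real hB (measure_ne_top μ _) ?_ hIntd.integrableOn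
      rintro x ⟨⟨hx1, -⟩, hx3⟩
      by_contra h
      push_neg at h
      exact hx3 ⟨hx1, h.le⟩
    have hIA : ∫ x in B, (δbar - η x) ∂μ ≤ ∫ x in A, (δbar - η x) ∂μ := by
      refine setIntegral_mono_set hIntd.integrableOn ?_ hBsubA.eventuallyLE
      filter_upwards [ae_restrict_mem hA] with x hx
      have := hx.2
      simp only [mem_setOf_eq] at this
      simp only [Pi.zero_apply]
      linarith
    have hfinal : k₀ ^ 2 / (4 * k₁) * Δ ^ 2 ≤ ∫ x in A, (δbar - η x) ∂μ := by
      have h1 : t * (k₀ * Δ / 2) ≤ t * (μ B).toReal :=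
        mul_le_mul_of_nonneg_left hμBlb ht0.le
      have h2 : k₀ ^ 2 / (4 * k₁) * Δ ^ 2 = t * (k₀ * Δ / 2) := by
        rw [ht_def]; field_simp; ring
      linarith
    have hIA0 : 0 ≤ ∫ x in A, (δbar - η x) ∂μ :=
      le_trans (mul_nonneg ht0.le ENNReal.toReal_nonneg) (le_trans hIB hIA)
    have hfirst : k₀ ^ 2 / (4 * k₁) * Δ ^ 2 ≤ Φ δbar - Φ δ' := by
      rw [hkey]
      have hMI := mul_le_mul_of_nonneg_right hM1 hIA0
      rw [one_mul] at hMI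
      linarith
    refine ⟨hfirst, ?_⟩
    intro εΩ hε habs
    have hlt : k₀ ^ 2 / (4 * k₁) * Δ ^ 2 < εΩ :=
      lt_of_le_of_lt (le_trans hfirst (le_abs_self _)) habs
    have hmul : k₀ ^ 2 * Δ ^ 2 < 4 * k₁ * εΩ := by
      have h4 : (0:ℝ) < 4 * k₁ := by positivity
      calc k₀ ^ 2 * Δ ^ 2 = (k₀ ^ 2 / (4 * k₁) * Δ ^ 2) * (4 * k₁) := by
            field_simp
        _ < εΩ * (4 * k₁) := mul_lt_mul_of_pos_right hlt h4
        _ = 4 * k₁ * εΩ := by ring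
    have h1 : k₀ * Δ / 2 < Real.sqrt (k₁ * εΩ) := by
      have hnn : 0 ≤ k₀ * Δ / 2 := by positivity
      exact (Real.lt_sqrt hnn).mpr (by nlinarith)
    rw [abs_of_nonneg hΔ0]
    calc Δ = (2 / k₀) * (k₀ * Δ / 2) := by field_simp
      _ < (2 / k₀) * Real.sqrt (k₁ * εΩ) :=
        mul_lt_mul_of_pos_left h1 (by positivity)
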